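/- Let m ≥ 2 and n ≥ 1, and let f : E^m → E^n be a function. If 0 is a limit point of the set P_f of distances preserved by f (i.e. for every ε > 0 there exists r ∈ P_f with 0 < r < ε), then f is 1-Lipschitz: d(f(x), f(y)) ≤ d(x, y) for all x, y ∈ E^m. -/

import Mathlib

open Module

lemma exists_unit_orthogonal {m : ℕ} (hm : 2 ≤ m) (v : EuclideanSpace ℝ (Fin m)) :
    ∃ u : EuclideanSpace ℝ (Fin m), ‖u‖ = 1 ∧ inner ℝ v u = (0 : ℝ) := by
  have hfin : finrank ℝ (EuclideanSpace ℝ (Fin m)) = m := by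
    simp [finrank_euclideanSpace]
  have h1 : finrank ℝ (ℝ ∙ v) ≤ 1 := by
    rcases eq_or_ne v 0 with h | h
    · subst h
      rw [Submodule.span_zero_singleton, finrank_bot]
      norm_num
    · rw [finrank_span_singleton h]
  have h2 : finrank ℝ (ℝ ∙ v) + finrank ℝ (ℝ ∙ v)ᗮ = m := by
    rw [Submodule.finrank_add_finrank_orthogonal, hfin]
  have hpos : 0 < finrank ℝ ((ℝ ∙ v)ᗮ : Submodule ℝ (EuclideanSpace ℝ (Fin m))) := by
    omega
  haveI := finrank_pos_iff.mp hpos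
  obtain ⟨w0, hw0⟩ : ∃ w0 : (ℝ ∙ v)ᗮ, w0 ≠ 0 := exists_ne 0
  have hw0' : (w0 : EuclideanSpace ℝ (Fin m)) ≠ 0 := Submodule.coe_eq_zero.not.mpr hw0
  refine ⟨‖(w0 : EuclideanSpace ℝ (Fin m))‖⁻¹ • w0, ?_, ?_⟩
  · rw [norm_smul, norm_inv, norm_norm, inv_mul_cancel₀ (norm_ne_zero_iff.mpr hw0')]
  · rw [real_inner_smul_right]
    have : inner ℝ v (w0 : EuclideanSpace ℝ (Fin m)) = (0 : ℝ) :=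
      w0.2 v (Submodule.mem_span_singleton_self v)
    rw [this, mul_zero]

set_option maxHeartbeats 800000 in
lemma two_hop {m : ℕ} (hm : 2 ≤ m) (r : ℝ) (hr : 0 < r)
    (x y : EuclideanSpace ℝ (Fin m)) (hd : dist x y ≤ 2 * r) :
    ∃ z, dist x z = r ∧ dist z y = r := by
  set v : EuclideanSpace ℝ (Fin m) := y - x with hv
  have hnv : ‖v‖ ≤ 2 * r := by rw [dist_eq_norm'] at hd; rwa [← hv] at hd
  obtain ⟨u, hu1, hu0⟩ := exists_unit_orthogonal hm v
  set h : ℝ := Real.sqrt (r ^ 2 - (‖v‖ / 2) ^ 2) with hh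
  have hvr : ‖v‖ / 2 ≤ r := by linarith
  have hnn : 0 ≤ r ^ 2 - (‖v‖ / 2) ^ 2 := by nlinarith [norm_nonneg v]
  have hsq : h ^ 2 = r ^ 2 - (‖v‖ / 2) ^ 2 := Real.sq_sqrt hnn
  refine ⟨x + ((1 / 2 : ℝ) • v + h • u), ?_, ?_⟩
  · rw [dist_self_add_right]
    have hnorm2 : ‖(1 / 2 : ℝ) • v + h • u‖ ^ 2 = r ^ 2 := by
      rw [norm_add_sq_real, real_inner_smul_left, real_inner_smul_right, hu0]
      rw [norm_smul, norm_smul, hu1]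
      simp only [Real.norm_eq_abs, mul_zero, mul_one]
      rw [abs_of_nonneg (by norm_num : (0:ℝ) ≤ 1/2),
        abs_of_nonneg (Real.sqrt_nonneg _)]
      nlinarith [hsq]
    calc ‖(1 / 2 : ℝ) • v + h • u‖ = Real.sqrt (‖(1 / 2 : ℝ) • v + h • u‖ ^ 2) :=
        (Real.sqrt_sq (norm_nonneg _)).symm
      _ = Real.sqrt (r ^ 2) := by rw [hnorm2]
      _ = r := Real.sqrt_sq hr.le
  · have hzy : x + ((1 / 2 : ℝ) • v + h • u) - y = -((1 / 2 : ℝ) • v) + h • u := by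
      have hy : y = x + v := by rw [hv]; abel
      have hneg : -((1 / 2 : ℝ) • v) = (1 / 2 : ℝ) • v - v := by
        rw [show ((1:ℝ)/2) • v - v = ((1:ℝ)/2 - 1) • v by rw [sub_smul, one_smul],
          show ((1:ℝ)/2 - 1) = -(1/2) by norm_num, neg_smul]
      rw [hy, hneg]
      abel
    rw [dist_eq_norm, hzy]
    have hnorm2 : ‖-((1 / 2 : ℝ) • v) + h • u‖ ^ 2 = r ^ 2 := by
      rw [norm_add_sq_real, inner_neg_left, real_inner_smul_left, real_inner_smul_right, hu0]
      rw [norm_neg, norm_smul, norm_smul, hu1]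
      simp only [Real.norm_eq_abs, mul_zero, mul_one, neg_zero]
      rw [abs_of_nonneg (by norm_num : (0:ℝ) ≤ 1/2),
        abs_of_nonneg (Real.sqrt_nonneg _)]
      nlinarith [hsq]
    calc ‖-((1 / 2 : ℝ) • v) + h • u‖ = Real.sqrt (‖-((1 / 2 : ℝ) • v) + h • u‖ ^ 2) :=
        (Real.sqrt_sq (norm_nonneg _)).symm
      _ = Real.sqrt (r ^ 2) := by rw [hnorm2]
      _ = r := Real.sqrt_sq hr.le

lemma chain_bound {m n : ℕ} (hm : 2 ≤ m)
    (f : EuclideanSpace ℝ (Fin m) → EuclideanSpace ℝ (Fin n))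
    (r : ℝ) (hr : 0 < r)
    (hf : ∀ x y, dist x y = r → dist (f x) (f y) = r) :
    ∀ k : ℕ, ∀ x y, dist x y ≤ (k + 2) * r → dist (f x) (f y) ≤ (k + 2) * r := by
  intro k
  induction k with
  | zero =>
    intro x y hxy
    obtain ⟨z, h1, h2⟩ := two_hop hm r hr x y (by push_cast at hxy; linarith)
    calc dist (f x) (f y) ≤ dist (f x) (f z) + dist (f z) (f y) := dist_triangle _ _ _
      _ = r + r := by rw [hf x z h1, hf z y h2]
      _ ≤ ((0:ℕ) + 2) * r := by push_cast; linarith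
  | succ k ih =>
    intro x y hxy
    by_cases hc : dist x y ≤ (k + 2) * r
    · refine (ih x y hc).trans ?_
      have : (0:ℝ) ≤ r := hr.le
      push_cast
      nlinarith
    · push_neg at hc
      set d := dist x y with hdd
      have hd0 : 0 < d := lt_of_lt_of_le (by positivity) hc.le
      have hrd : r ≤ d := by nlinarith [hc, hr.le]
      set z : EuclideanSpace ℝ (Fin m) := x + (r / d) • (y - x) with hz
      have hxz : dist x z = r := by
        rw [hz, dist_self_add_right, norm_smul, Real.norm_eq_abs,
          abs_of_nonneg (by positivity : (0:ℝ) ≤ r / d), ← dist_eq_norm', ← hdd]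
        field_simp
      have hzy : dist z y = d - r := by
        have hsub : z - y = (r / d - 1) • (y - x) := by
          rw [hz, sub_smul, one_smul]; abel
        rw [dist_eq_norm, hsub, norm_smul, Real.norm_eq_abs, ← dist_eq_norm', ← hdd]
        rw [abs_of_nonpos (by rw [sub_nonpos, div_le_one hd0]; exact hrd)]
        field_simp
        ring
      have hstep : dist z y ≤ (k + 2) * r := by
        rw [hzy]
        push_cast at hxy ⊢
        linarith
      calc dist (f x) (f y) ≤ dist (f x) (f z) + dist (f z) (f y) := dist_triangle _ _ _
        _ ≤ r + (k + 2) * r := by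
            rw [hf x z hxz]
            exact add_le_add le_rfl (ih z y hstep)
        _ = (↑(k + 1) + 2) * r := by push_cast; ring

theorem stmt_3 (m n : ℕ) (hm : 2 ≤ m) (hn : 1 ≤ n)
    (f : EuclideanSpace ℝ (Fin m) → EuclideanSpace ℝ (Fin n))
    (hlim : ∀ ε > 0, ∃ r, 0 < r ∧ r < ε ∧
      ∀ x y, dist x y = r → dist (f x) (f y) = r) :
    ∀ x y, dist (f x) (f y) ≤ dist x y := by
  intro x y
  refine le_of_forall_pos_le_add ?_
  intro ε hε
  obtain ⟨r, hr0, hrε, hf⟩ := hlim (ε / 3) (by positivity)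
  set d := dist x y with hd
  set k := ⌈d / r⌉₊ with hk
  have hdr : 0 ≤ d / r := by positivity
  have h1 : d ≤ (k + 2) * r := by
    have := Nat.le_ceil (d / r)
    have h1' : d ≤ (k : ℝ) * r := (div_le_iff₀ hr0).mp this
    nlinarith [hr0.le]
  have h2 : ((k : ℝ) + 2) * r ≤ d + ε := by
    have := Nat.ceil_lt_add_one hdr
    have hk' : (k : ℝ) < d / r + 1 := this
    have : (k : ℝ) * r < d + r := by
      have := mul_lt_mul_of_pos_right hk' hr0
      rwa [add_mul, div_mul_cancel₀ _ hr0.ne', one_mul] at this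
    nlinarith
  calc dist (f x) (f y) ≤ (k + 2) * r := chain_bound hm f r hr0 hf k x y h1
    _ ≤ d + ε := h2
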